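/- Let n be a positive integer and let {(a_i, b_i) : i = 0, 1, 2} be an n-Farey triple. Then: (i) a_i + b_i = b_{i+1} + a_{i+2} for each i (indices mod 3); (ii) min_i (a_i + b_i) < √(4n/3); and (iii) if moreover min_i (a_i + b_i) > √n, then max(a_i, b_i) < √n for all i, each (a_i,b_i) is a side of dF_v with v = ⌊√n⌋, and each (a_i,b_i) is a free side. -/
import Mathlib


/-- An `n`-Farey triple: three pairwise distinct pairs `(aᵢ, bᵢ)` of coprime positive
integers with `a_{i+1} (aᵢ + bᵢ) + b_{i+1} bᵢ = n` for each `i` (indices mod 3). -/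
def IsFareyTriple (n : ℕ) (P : Fin 3 → ℕ × ℕ) : Prop :=
  (∀ i, 0 < (P i).1 ∧ 0 < (P i).2 ∧ Nat.Coprime (P i).1 (P i).2) ∧
  Function.Injective P ∧
  ∀ i : Fin 3, (P (i + 1)).1 * ((P i).1 + (P i).2) + (P (i + 1)).2 * (P i).2 = n

/-- `(a, b)` is a side of `dF_v`: `a, b` are coprime positive integers with `a, b ≤ v` and
`a + b > v` (i.e. `a, b` are the denominators of two consecutive fractions in the Farey
sequence of order `v`). -/
def IsSide (v a b : ℕ) : Prop :=
  0 < a ∧ 0 < b ∧ Nat.Coprime a b ∧ a ≤ v ∧ b ≤ v ∧ v < a + b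

/-- `(a, b)` is a free side of `dF_{⌊√n⌋}` with respect to `Γ₀(n)`: it is a side, `n` does not
divide `a² + ab + b²`, and `n` does not divide `ax + by` for any side `(x, y)`. -/
def IsFreeSide (n a b : ℕ) : Prop :=
  IsSide (Nat.sqrt n) a b ∧ ¬ n ∣ a ^ 2 + a * b + b ^ 2 ∧
    ∀ x y : ℕ, IsSide (Nat.sqrt n) x y → ¬ n ∣ a * x + b * y

lemma aux1 (n a0 b0 a1 b1 a2 b2 : ℕ) (ha0 : 0 < a0) (hb2 : 0 < b2)
    (hcop1 : Nat.Coprime a1 b1)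
    (h0 : a1*(a0+b0) + b1*b0 = n) (h1 : a2*(a1+b1) + b2*b1 = n) :
    ∃ k, 0 < k ∧ a0 + b2 = k*(a1+b1) ∧ a2 + k*b1 = a0 + b0 := by
  have hc1pos : 0 < a1 + b1 := by
    have : ¬(a1 = 0 ∧ b1 = 0) := by
      rintro ⟨rfl, rfl⟩; simp [Nat.Coprime] at hcop1
    omega
  have hdZ : ((a1:ℤ)+b1) ∣ (b1:ℤ)*(a0+b2) := by
    refine ⟨(a0:ℤ) + b0 - a2, ?_⟩
    have h0' : (a1:ℤ)*(a0+b0) + b1*b0 = n := by exact_mod_cast h0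
    have h1' : (a2:ℤ)*(a1+b1) + b2*b1 = n := by exact_mod_cast h1
    linear_combination h1' - h0'
  have hcop' : Nat.Coprime (a1+b1) b1 := Nat.coprime_add_self_left.mpr hcop1
  have hdN : (a1+b1) ∣ b1*(a0+b2) := by exact_mod_cast hdZ
  have hd2 : (a1+b1) ∣ (a0+b2) := hcop'.dvd_of_dvd_mul_left hdN
  obtain ⟨k, hk⟩ := hd2
  have hkpos : 0 < k := by
    rcases Nat.eq_zero_or_pos k with rfl | h
    · simp at hk; omega
    · exact h
  refine ⟨k, hkpos, by rw [hk, Nat.mul_comm], ?_⟩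
  have h0' : (a1:ℤ)*(a0+b0) + b1*b0 = n := by exact_mod_cast h0
  have h1' : (a2:ℤ)*(a1+b1) + b2*b1 = n := by exact_mod_cast h1
  have hk' : (a0:ℤ) + b2 = (a1+b1) * k := by exact_mod_cast hk
  have key : ((a1:ℤ)+b1) * (a2 + k*b1) = ((a1:ℤ)+b1) * (a0 + b0) := by
    linear_combination h1' - h0' - b1 * hk'
  have h2 : (a2:ℤ) + k*b1 = a0 + b0 :=
    mul_left_cancel₀ (by exact_mod_cast hc1pos.ne') key
  exact_mod_cast h2

lemma dioph (n a b X Y x y : ℕ) (hcop : Nat.Coprime a b) (hb : 0 < b)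
    (h1 : a*X + b*Y = n) (h2 : a*x + b*y = n) :
    ∃ t : ℤ, (x:ℤ) = X - b*t ∧ (y:ℤ) = Y + a*t := by
  have h1' : (a:ℤ)*X + b*Y = n := by exact_mod_cast h1
  have h2' : (a:ℤ)*x + b*y = n := by exact_mod_cast h2
  have hdvd : (b:ℤ) ∣ (a:ℤ) * ((X:ℤ) - x) := ⟨(y:ℤ) - Y, by linear_combination h1' - h2'⟩
  have hcopZ : IsCoprime (b:ℤ) (a:ℤ) := Nat.isCoprime_iff_coprime.mpr hcop.symm
  have hdvd2 : (b:ℤ) ∣ ((X:ℤ) - x) := hcopZ.dvd_of_dvd_mul_left hdvd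
  obtain ⟨t, ht⟩ := hdvd2
  refine ⟨t, by linarith [ht], ?_⟩
  have hbne : (b:ℤ) ≠ 0 := by exact_mod_cast hb.ne'
  have : (b:ℤ) * ((y:ℤ)) = (b:ℤ) * (Y + a*t) := by linear_combination h2' - h1' + a * ht
  exact mul_left_cancel₀ hbne this

lemma key2 (n a b t ai : ℕ) (ha : 0 < a) (hb : 0 < b) (ht : 0 < t) (hai : 0 < ai)
    (hcop : Nat.Coprime a b) (hne : (ai, t) ≠ (a, b))
    (hm1 : ai + t ≤ a + b) (hm2 : ai ≤ a)
    (hn : a * (ai + t) + b * t = n) :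
    3 * (ai + t)^2 < 4 * n := by
  by_contra hcon
  push_neg at hcon
  rcases le_or_gt (ai + t) a with ham | ham
  · nlinarith
  · obtain ⟨u, hu⟩ : ∃ u, a + b = (ai + t) + u := ⟨a + b - (ai+t), by omega⟩
    obtain ⟨v, hv⟩ : ∃ v, a = ai + v := ⟨a - ai, by omega⟩
    have hnZ : (a:ℤ) * (ai + t) + b * t = n := by exact_mod_cast hn
    have huZ : (a:ℤ) + b = (ai + t) + u := by exact_mod_cast hu
    have hvZ : (a:ℤ) = ai + v := by exact_mod_cast hv
    have hconZ : 4 * (n:ℤ) ≤ 3 * ((ai:ℤ) + t)^2 := by exact_mod_cast hcon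
    have hid : 4 * (n:ℤ) = 3 * ((ai:ℤ)+t)^2 + (((ai:ℤ)+t) - 2*a)^2
        + 4*(((ai:ℤ)+t) - a)*((u:ℤ)+v) + 4*(u:ℤ)*v := by
      linear_combination (-4:ℤ) * hnZ + 4 * (t:ℤ) * huZ + 4 * (((ai:ℤ)+t) + u - a) * hvZ
    have hsq : (0:ℤ) ≤ (((ai:ℤ)+t) - 2*a)^2 := sq_nonneg _
    have hmaZ : (1:ℤ) ≤ ((ai:ℤ)+t) - a := by
      have : a < ai + t := ham
      have : (a:ℤ) < (ai:ℤ) + t := by exact_mod_cast this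
      linarith
    have huv : (0:ℤ) ≤ (u:ℤ) * v := by positivity
    have huvn : (0:ℤ) ≤ (u:ℤ) + v := by positivity
    have h1 : 4*(((ai:ℤ)+t) - a)*((u:ℤ)+v) ≤ 0 := by linarith
    have h2 : (u:ℤ) + v ≤ 0 := by
      nlinarith [mul_le_mul_of_nonneg_right hmaZ huvn]
    have hu0 : u = 0 := by omega
    have hv0 : v = 0 := by omega
    subst hu0 hv0
    have hsq0 : (((ai:ℤ)+t) - 2*a)^2 = 0 := by push_cast at hid ⊢; linarith
    have h3 : ((ai:ℤ)+t) - 2*a = 0 := pow_eq_zero_iff (n := 2) (by norm_num) |>.mp hsq0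
    have hmn : ai + t = 2*a := by
      have : (ai:ℤ) + t = 2*a := by linarith
      exact_mod_cast this
    have hba : b = a := by omega
    have ha1 : a = 1 := by
      rw [hba] at hcop
      simpa [Nat.Coprime, Nat.gcd_self] using hcop
    apply hne
    have hait : ai = 1 ∧ t = 1 := by omega
    simp [hait.1, hait.2, ha1, hba]

lemma sq_lt_of (b c n : ℕ) (h1 : b*c < n) (h2 : n < c*c) : b*b < n := by
  by_contra h
  push_neg at h
  have h3 : n*n ≤ (b*b)*(c*c) := Nat.mul_le_mul h h2.le
  have h4 : (b*c)*(b*c) < n*n :=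
    mul_lt_mul'' h1 h1 (Nat.zero_le _) (Nat.zero_le _)
  have h5 : (b*b)*(c*c) = (b*c)*(b*c) := by ring
  omega

lemma mul_lt_of (a x n : ℕ) (h1 : a*a < n) (h2 : x*x ≤ n) : a*x < n := by
  by_contra h
  push_neg at h
  have h3 : n*n ≤ (a*x)*(a*x) := Nat.mul_le_mul h h
  have h4 : (a*x)*(a*x) = (a*a)*(x*x) := by ring
  have h5 : (a*a)*(x*x) ≤ (a*a)*n := Nat.mul_le_mul_left _ h2
  have h6 : (a*a)*n < n*n := Nat.mul_lt_mul_of_lt_of_le h1 (le_refl n) (by omega)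
  omega

lemma aux3 (n : ℕ) (a b A1 B1 A2 B2 : ℕ)
    (ha : 0 < a) (hb : 0 < b) (hA1 : 0 < A1) (hB1 : 0 < B1) (hA2 : 0 < A2) (hB2 : 0 < B2)
    (hcop : Nat.Coprime a b)
    (hne : (a, b) ≠ (A2, B2))
    (hprev : a * (A2 + B2) + b * B2 = n)
    (hself : A1 * (a + b) + B1 * b = n)
    (g1 : A1 + B1 = B2 + a)
    (hc0 : n < (a+b)^2) (hc1 : n < (A1+B1)^2) (hc2 : n < (A2+B2)^2) :
    a*a < n ∧ b*b < n ∧ (¬ n ∣ a^2 + a*b + b^2) ∧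
      ∀ x y : ℕ, IsSide (Nat.sqrt n) x y → ¬ n ∣ a*x + b*y := by
  have hbB2 : 0 < b * B2 := by positivity
  have hnpos : 0 < n := by
    have : 0 < a * (A2+B2) := by positivity
    omega
  have haX : a * (A2 + B2) < n := by omega
  have hselfalt : A1*a + (B2+a)*b = n := by
    rw [← g1]; rw [← hself]; ring
  have hbYa : b * (B2 + a) < n := by
    have h1 : 0 < A1 * a := by positivity
    have h2 : b * (B2+a) = (B2+a)*b := Nat.mul_comm _ _
    omega
  have ha2 : a*a < n := sq_lt_of a (A2+B2) n haX (by rw [← pow_two]; exact hc2)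
  have hb2 : b*b < n := by
    refine sq_lt_of b (B2+a) n hbYa ?_
    have h4 : n < (B2 + a)^2 := by rw [← g1]; exact hc1
    rw [pow_two] at h4; exact h4
  have hab : a * b < n := mul_lt_of a b n ha2 hb2.le
  refine ⟨ha2, hb2, ?_, ?_⟩
  · rintro ⟨k, hk⟩
    have hsval : a^2 + a*b + b^2 = a*a + a*b + b*b := by ring
    have hspos : 0 < a^2 + a*b + b^2 := by positivity
    have hslt : a^2 + a*b + b^2 < 3*n := by omega
    have hodd : Odd (a^2 + a*b + b^2) := by
      rcases Nat.even_or_odd a with hea | hoa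
      · rcases Nat.even_or_odd b with heb | hob
        · exfalso
          obtain ⟨p, hp⟩ := hea; obtain ⟨q, hq⟩ := heb
          have h2a : 2 ∣ a := ⟨p, by omega⟩
          have h2b : 2 ∣ b := ⟨q, by omega⟩
          have := Nat.dvd_gcd h2a h2b
          rw [hcop] at this
          omega
        · obtain ⟨p, hp⟩ := hea; obtain ⟨q, hq⟩ := hob
          exact ⟨2*p^2 + 2*p*q + p + 2*q^2 + 2*q, by subst hp hq; ring⟩
      · rcases Nat.even_or_odd b with heb | hob
        · obtain ⟨p, hp⟩ := hoa; obtain ⟨q, hq⟩ := heb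
          exact ⟨2*p^2 + 2*p + 2*p*q + q + 2*q^2, by subst hp hq; ring⟩
        · obtain ⟨p, hp⟩ := hoa; obtain ⟨q, hq⟩ := hob
          exact ⟨2*p^2 + 2*p + 2*p*q + p + q + 2*q^2 + 2*q + 1, by subst hp hq; ring⟩
    have hk12 : a^2 + a*b + b^2 = n ∨ a^2 + a*b + b^2 = 2*n := by
      rcases k with _ | _ | _ | k
      · omega
      · left; omega
      · right; omega
      · exfalso
        have h3 : n*3 ≤ n*(k+1+1+1) := Nat.mul_le_mul_left n (by omega)
        omega
    rcases hk12 with hkk | hkk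
    · have heq : a * (a+b) + b * b = n := by
        have : a*(a+b) + b*b = a^2 + a*b + b^2 := by ring
        omega
      obtain ⟨t, hx, hy⟩ := dioph n a b (A2+B2) B2 (a+b) b hcop hb hprev heq
      push_cast at hx hy
      have hbZ : (0:ℤ) < b := by exact_mod_cast hb
      have haZ : (0:ℤ) < a := by exact_mod_cast ha
      rcases lt_trichotomy t 0 with htn | rfl | htp
      · have e1 : (b:ℤ)*1 ≤ b*(-t) := by
          have := mul_le_mul_of_nonneg_left (show (1:ℤ) ≤ -t by omega) hbZ.le
          linarith
        have e2 : (a:ℤ)*1 ≤ a*(-t) := by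
          have := mul_le_mul_of_nonneg_left (show (1:ℤ) ≤ -t by omega) haZ.le
          linarith
        have h1 : ((a:ℤ)+b) ≥ (A2:ℤ) + B2 + b := by
          have : (b:ℤ)*(-t) = -(b*t) := by ring
          linarith [hx]
        have h2 : ((b:ℤ)) ≤ (B2:ℤ) - a := by
          have : (a:ℤ)*(-t) = -(a*t) := by ring
          linarith [hy]
        have : (0:ℤ) < A2 := by exact_mod_cast hA2
        linarith
      · apply hne
        have hxx : (a:ℤ) + b = A2 + B2 := by simpa using hx
        have hyy : (b:ℤ) = B2 := by simpa using hy
        have hbb : b = B2 := by exact_mod_cast hyy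
        have haa : a = A2 := by
          have : (a:ℤ) = A2 := by omega
          exact_mod_cast this
        simp [haa, hbb]
      · have e2 : (a:ℤ)*1 ≤ a*t := by
          have := mul_le_mul_of_nonneg_left (show (1:ℤ) ≤ t by omega) haZ.le
          linarith
        have h1 : ((b:ℤ)) ≥ (B2:ℤ) + a := by linarith [hy]
        have h1' : B2 + a ≤ b := by exact_mod_cast h1
        have h2 : (B2+a)*(B2+a) ≤ b*b := Nat.mul_le_mul h1' h1'
        have h3 : n < (B2+a)*(B2+a) := by
          have h4 : n < (B2 + a)^2 := by rw [← g1]; exact hc1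
          rw [pow_two] at h4; exact h4
        omega
    · obtain ⟨m, hm⟩ := hodd
      rw [hkk] at hm
      omega
  · rintro x y ⟨hx0, hy0, hcxy, hxv, hyv, hvxy⟩ hdvd
    have hxx : x * x ≤ n := Nat.le_sqrt.mp hxv
    have hyy : y * y ≤ n := Nat.le_sqrt.mp hyv
    have hax : a * x < n := mul_lt_of a x n ha2 hxx
    have hby : b * y < n := mul_lt_of b y n hb2 hyy
    have heq : a * x + b * y = n := by
      obtain ⟨k, hk⟩ := hdvd
      have h1 : 0 < a * x := by positivity
      have h2 : 0 < b * y := by positivity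
      rcases k with _ | _ | k
      · omega
      · omega
      · exfalso
        have h3 : n*2 ≤ n*(k+1+1) := Nat.mul_le_mul_left n (by omega)
        omega
    obtain ⟨t, hxeq, hyeq⟩ := dioph n a b (A2+B2) B2 x y hcop hb hprev heq
    push_cast at hxeq hyeq
    have hvsq : Nat.sqrt n * Nat.sqrt n ≤ n := Nat.sqrt_le n
    have hbZ : (0:ℤ) < b := by exact_mod_cast hb
    have haZ : (0:ℤ) < a := by exact_mod_cast ha
    rcases le_or_gt t 0 with htn | htp
    · have e1 : (0:ℤ) ≤ b*(-t) := mul_nonneg hbZ.le (by omega)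
      have h1 : ((x:ℤ)) ≥ (A2:ℤ) + B2 := by
        have : (b:ℤ)*(-t) = -(b*t) := by ring
        linarith [hxeq]
      have h1' : A2 + B2 ≤ x := by exact_mod_cast h1
      have h2 : (A2+B2)*(A2+B2) ≤ x*x := Nat.mul_le_mul h1' h1'
      have h3 : n < (A2+B2)*(A2+B2) := by rw [← pow_two]; exact hc2
      omega
    · have e2 : (a:ℤ)*1 ≤ a*t := by
        have := mul_le_mul_of_nonneg_left (show (1:ℤ) ≤ t by omega) haZ.le
        linarith
      have h1 : ((y:ℤ)) ≥ (B2:ℤ) + a := by linarith [hyeq]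
      have h1' : B2 + a ≤ y := by exact_mod_cast h1
      have h2 : (B2+a)*(B2+a) ≤ y*y := Nat.mul_le_mul h1' h1'
      have h3 : n < (B2+a)*(B2+a) := by
        have h4 : n < (B2 + a)^2 := by rw [← g1]; exact hc1
        rw [pow_two] at h4; exact h4
      omega

lemma cast_sqrt43 (m n : ℕ) (h : 3*m^2 < 4*n) : (m:ℝ) < Real.sqrt (4*n/3) := by
  rw [Real.lt_sqrt (by positivity), lt_div_iff₀ (by norm_num : (0:ℝ) < 3)]
  have h' : ((3*m^2 : ℕ) : ℝ) < ((4*n : ℕ) : ℝ) := by exact_mod_cast h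
  push_cast at h'
  linarith

lemma cast_lt_sqrt (m n : ℕ) (h : m*m < n) : (m:ℝ) < Real.sqrt n := by
  rw [Real.lt_sqrt (by positivity)]
  have h' : m^2 < n := by rw [pow_two]; exact h
  exact_mod_cast h'

/-- **Lemma.** Let `{(aᵢ, bᵢ)}` be an `n`-Farey triple. Then
(i) `aᵢ + bᵢ = b_{i+1} + a_{i+2}` for each `i`;
(ii) `minᵢ (aᵢ + bᵢ) < √(4n/3)`;
(iii) if moreover `minᵢ (aᵢ + bᵢ) > √n`, then `max(aᵢ, bᵢ) < √n` for all `i` and every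
`(aᵢ, bᵢ)` is a free side of `dF_{⌊√n⌋}`. -/
theorem stmt9 (n : ℕ) (hn : 0 < n) (P : Fin 3 → ℕ × ℕ) (hP : IsFareyTriple n P) :
    (∀ i : Fin 3, (P i).1 + (P i).2 = (P (i + 1)).2 + (P (i + 2)).1) ∧
    (∃ i : Fin 3, (∀ j, (P i).1 + (P i).2 ≤ (P j).1 + (P j).2) ∧
      ((P i).1 + (P i).2 : ℝ) < Real.sqrt (4 * n / 3)) ∧
    ((∀ i : Fin 3, Real.sqrt n < ((P i).1 + (P i).2 : ℝ)) →
      ∀ i : Fin 3, (max (P i).1 (P i).2 : ℝ) < Real.sqrt n ∧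
        IsFreeSide n (P i).1 (P i).2) := by

  obtain ⟨hpos, hinj, heq⟩ := hP
  have h0 := heq 0
  have h1 := heq 1
  have h2 := heq 2
  simp only [show ((0:Fin 3)+1) = 1 from rfl] at h0
  simp only [show ((1:Fin 3)+1) = 2 from rfl] at h1
  simp only [show ((2:Fin 3)+1) = 0 from rfl] at h2
  obtain ⟨ha0, hb0, hcop0⟩ := hpos 0
  obtain ⟨ha1, hb1, hcop1⟩ := hpos 1
  obtain ⟨ha2, hb2, hcop2⟩ := hpos 2
  set a0 := (P 0).1
  set b0 := (P 0).2
  set a1 := (P 1).1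
  set b1 := (P 1).2
  set a2 := (P 2).1
  set b2 := (P 2).2
  -- part (i)
  obtain ⟨k0, hk0p, hk0a, hk0b⟩ := aux1 n a0 b0 a1 b1 a2 b2 ha0 hb2 hcop1 h0 h1
  obtain ⟨k1, hk1p, hk1a, hk1b⟩ := aux1 n a1 b1 a2 b2 a0 b0 ha1 hb0 hcop2 h1 h2
  obtain ⟨k2, hk2p, hk2a, hk2b⟩ := aux1 n a2 b2 a0 b0 a1 b1 ha2 hb1 hcop0 h2 h0
  have s0 : b1 ≤ k0*b1 := Nat.le_mul_of_pos_left b1 hk0p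
  have s1 : b2 ≤ k1*b2 := Nat.le_mul_of_pos_left b2 hk1p
  have s2 : b0 ≤ k2*b0 := Nat.le_mul_of_pos_left b0 hk2p
  have e0 : k0*b1 = b1 := by omega
  have e1 : k1*b2 = b2 := by omega
  have e2 : k2*b0 = b0 := by omega
  have g0 : a0 + b0 = b1 + a2 := by omega
  have g1 : a1 + b1 = b2 + a0 := by omega
  have g2 : a2 + b2 = b0 + a1 := by omega
  have hne01 : (a0, b0) ≠ (a1, b1) := by
    intro h
    have : P 0 = P 1 := by
      have p0 : P 0 = (a0, b0) := rfl
      have p1 : P 1 = (a1, b1) := rfl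
      rw [p0, p1, h]
    exact (by decide : (0:Fin 3) ≠ 1) (hinj this)
  have hne12 : (a1, b1) ≠ (a2, b2) := by
    intro h
    have : P 1 = P 2 := by
      have p1 : P 1 = (a1, b1) := rfl
      have p2 : P 2 = (a2, b2) := rfl
      rw [p1, p2, h]
    exact (by decide : (1:Fin 3) ≠ 2) (hinj this)
  have hne20 : (a2, b2) ≠ (a0, b0) := by
    intro h
    have : P 2 = P 0 := by
      have p2 : P 2 = (a2, b2) := rfl
      have p0 : P 0 = (a0, b0) := rfl
      rw [p2, p0, h]
    exact (by decide : (2:Fin 3) ≠ 0) (hinj this)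
  refine ⟨?_, ?_, ?_⟩
  · intro i
    fin_cases i
    · exact g0
    · exact g1
    · exact g2
  · -- part (ii)
    have case0 : a0 + b0 ≤ a1 + b1 → a0 + b0 ≤ a2 + b2 → 3*(a0+b0)^2 < 4*n := by
      intro hA hB
      exact key2 n a1 b1 b0 a0 ha1 hb1 hb0 ha0 hcop1 hne01 hA (by omega) h0
    have case1 : a1 + b1 ≤ a2 + b2 → a1 + b1 ≤ a0 + b0 → 3*(a1+b1)^2 < 4*n := by
      intro hA hB
      exact key2 n a2 b2 b1 a1 ha2 hb2 hb1 ha1 hcop2 hne12 hA (by omega) h1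
    have case2 : a2 + b2 ≤ a0 + b0 → a2 + b2 ≤ a1 + b1 → 3*(a2+b2)^2 < 4*n := by
      intro hA hB
      exact key2 n a0 b0 b2 a2 ha0 hb0 hb2 ha2 hcop0 hne20 hA (by omega) h2
    rcases le_total (a0+b0) (a1+b1) with h01 | h01
    · rcases le_total (a0+b0) (a2+b2) with h02 | h02
      · refine ⟨0, ?_, ?_⟩
        · intro j; fin_cases j
          · exact le_refl _
          · exact h01
          · exact h02
        · have := cast_sqrt43 (a0+b0) n (case0 h01 h02)
          push_cast at this ⊢
          convert this using 2
      · refine ⟨2, ?_, ?_⟩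
        · intro j; fin_cases j
          · exact h02
          · exact le_trans h02 h01
          · exact le_refl _
        · have := cast_sqrt43 (a2+b2) n (case2 h02 (by omega))
          push_cast at this ⊢
          convert this using 2
    · rcases le_total (a1+b1) (a2+b2) with h12 | h12
      · refine ⟨1, ?_, ?_⟩
        · intro j; fin_cases j
          · exact h01
          · exact le_refl _
          · exact h12
        · have := cast_sqrt43 (a1+b1) n (case1 h12 h01)
          push_cast at this ⊢
          convert this using 2
      · refine ⟨2, ?_, ?_⟩
        · intro j; fin_cases j
          · exact le_trans h12 h01
          · exact h12
          · exact le_refl _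
        · have := cast_sqrt43 (a2+b2) n (case2 (by omega) h12)
          push_cast at this ⊢
          convert this using 2
  · -- part (iii)
    intro hmin
    have hcsq : ∀ i : Fin 3, n < ((P i).1 + (P i).2)^2 := by
      intro i
      have hp := hpos i
      have h := hmin i
      have hposR : (0:ℝ) < ((P i).1 : ℝ) + ((P i).2 : ℝ) := by
        have : 0 < (P i).1 := hp.1
        positivity
      rw [Real.sqrt_lt' hposR] at h
      have : (n:ℝ) < (((P i).1 + (P i).2 : ℕ) : ℝ)^2 := by push_cast; convert h using 2
      exact_mod_cast this
    have hc0 := hcsq 0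
    have hc1 := hcsq 1
    have hc2 := hcsq 2
    have K0 := aux3 n a0 b0 a1 b1 a2 b2 ha0 hb0 ha1 hb1 ha2 hb2 hcop0
      (by intro h; exact hne20 h.symm) h2 h0 g1 hc0 hc1 hc2
    have K1 := aux3 n a1 b1 a2 b2 a0 b0 ha1 hb1 ha2 hb2 ha0 hb0 hcop1
      (by intro h; exact hne01 h.symm) h0 h1 g2 hc1 hc2 hc0
    have K2 := aux3 n a2 b2 a0 b0 a1 b1 ha2 hb2 ha0 hb0 ha1 hb1 hcop2
      (by intro h; exact hne12 h.symm) h1 h2 g0 hc2 hc0 hc1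
    intro i
    fin_cases i
    · obtain ⟨m1, m2, m3, m4⟩ := K0
      constructor
      · exact max_lt (cast_lt_sqrt _ n m1) (cast_lt_sqrt _ n m2)
      · exact ⟨⟨ha0, hb0, hcop0, Nat.le_sqrt.mpr m1.le, Nat.le_sqrt.mpr m2.le,
          Nat.sqrt_lt'.mpr hc0⟩, m3, m4⟩
    · obtain ⟨m1, m2, m3, m4⟩ := K1
      constructor
      · exact max_lt (cast_lt_sqrt _ n m1) (cast_lt_sqrt _ n m2)
      · exact ⟨⟨ha1, hb1, hcop1, Nat.le_sqrt.mpr m1.le, Nat.le_sqrt.mpr m2.le,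
          Nat.sqrt_lt'.mpr hc1⟩, m3, m4⟩
    · obtain ⟨m1, m2, m3, m4⟩ := K2
      constructor
      · exact max_lt (cast_lt_sqrt _ n m1) (cast_lt_sqrt _ n m2)
      · exact ⟨⟨ha2, hb2, hcop2, Nat.le_sqrt.mpr m1.le, Nat.le_sqrt.mpr m2.le,
          Nat.sqrt_lt'.mpr hc2⟩, m3, m4⟩
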